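/- Let λ > 0 and 0 < p ≤ 1, and set a := (λ + 1)/p. Let f : ℕ → ℝ be a sequence with f_i ≥ 0 for all i ≥ 1, satisfying f_i ≤ ( p·(i − 1) / (λ + 1 + p·i) )·f_{i−1} for every integer i ≥ 2. Then for every integer i ≥ 1, f_i ≤ f_1 · Γ(2 + a) · Γ(i)/Γ(i + 1 + a), and consequently there exists a constant M ≥ 0 such that f_i ≤ M · i^{−(1 + (λ+1)/p)} for all integers i ≥ 1. -/

import Mathlib

lemma key_ineq (a x : ℝ) (ha : 0 < a) (hx : 1 ≤ x) :
    x * (x + 1 + a) ^ a ≤ (x + a) ^ (1 + a) := by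
  have hx0 : 0 < x := lt_of_lt_of_le one_pos hx
  have hxa : 0 < x + a := by linarith
  have hr : (0:ℝ) < (x + 1 + a) / (x + a) := by positivity
  have hsplit : (x + 1 + a) = ((x + 1 + a) / (x + a)) * (x + a) := by
    field_simp
  have hlog : Real.log ((x + 1 + a) / (x + a)) ≤ 1 / (x + a) := by
    have h := Real.log_le_sub_one_of_pos hr
    have heq : (x+1+a)/(x+a) - 1 = 1/(x+a) := by field_simp; ring
    linarith [heq ▸ h]
  have hrpow : ((x + 1 + a) / (x + a)) ^ a ≤ Real.exp (a / (x + a)) := by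
    rw [Real.rpow_def_of_pos hr]
    apply Real.exp_le_exp.mpr
    have h := mul_le_mul_of_nonneg_left hlog ha.le
    calc Real.log ((x+1+a)/(x+a)) * a = a * Real.log ((x+1+a)/(x+a)) := by ring
      _ ≤ a * (1/(x+a)) := h
      _ = a / (x+a) := by ring
  have hexp : Real.exp (a / (x + a)) ≤ (x + a) / x := by
    have h1 : 1 - a/(x+a) ≤ Real.exp (-(a/(x+a))) := by
      have := Real.add_one_le_exp (-(a/(x+a))); linarith
    have h2 : (0:ℝ) < 1 - a/(x+a) := by
      have : a/(x+a) < 1 := by rw [div_lt_one hxa]; linarith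
      linarith
    rw [Real.exp_neg] at h1
    have h3 : Real.exp (a/(x+a)) ≤ (1 - a/(x+a))⁻¹ := by
      rw [le_inv_comm₀ (Real.exp_pos _) h2] at *
      · exact h1
    calc Real.exp (a/(x+a)) ≤ (1 - a/(x+a))⁻¹ := h3
      _ = (x+a)/x := by field_simp; rw [add_sub_cancel_right, div_self hx0.ne']
  calc x * (x + 1 + a) ^ a
      = x * (((x+1+a)/(x+a)) ^ a * (x+a) ^ a) := by
        rw [← Real.mul_rpow hr.le hxa.le, ← hsplit]
    _ ≤ x * (((x+a)/x) * (x+a) ^ a) := by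
        apply mul_le_mul_of_nonneg_left _ hx0.le
        apply mul_le_mul_of_nonneg_right (le_trans hrpow hexp) (Real.rpow_nonneg hxa.le a)
    _ = (x+a) * (x+a)^a := by field_simp
    _ = (x+a)^(1+a) := by rw [Real.rpow_one_add' hxa.le (by intro h; linarith)]

theorem stmt_7 (lam p : ℝ) (hlam : 0 < lam) (hp0 : 0 < p) (hp1 : p ≤ 1)
    (f : ℕ → ℝ) (hf : ∀ i : ℕ, 1 ≤ i → 0 ≤ f i)
    (hrec : ∀ i : ℕ, 2 ≤ i → f i ≤ (p * ((i : ℝ) - 1) / (lam + 1 + p * i)) * f (i - 1)) :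
    (∀ i : ℕ, 1 ≤ i →
      f i ≤ f 1 * Real.Gamma (2 + (lam + 1) / p) * Real.Gamma i
              / Real.Gamma ((i : ℝ) + 1 + (lam + 1) / p))
    ∧ ∃ M : ℝ, 0 ≤ M ∧ ∀ i : ℕ, 1 ≤ i →
        f i ≤ M * (i : ℝ) ^ (-(1 + (lam + 1) / p)) := by
  set a : ℝ := (lam + 1) / p with ha_def
  have ha : 0 < a := by positivity
  have hrec' : ∀ i : ℕ, 1 ≤ i → f (i + 1) ≤ ((i : ℝ) / ((i : ℝ) + 1 + a)) * f i := by
    intro i hi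
    have h2 : 2 ≤ i + 1 := by omega
    have h := hrec (i + 1) h2
    simp only [Nat.add_sub_cancel] at h
    have hd : (0:ℝ) < lam + 1 + p * ((i:ℝ) + 1) := by
      have : (0:ℝ) ≤ (i:ℝ) := Nat.cast_nonneg _
      nlinarith
    have hd2 : (0:ℝ) < (i : ℝ) + 1 + a := by
      have : (0:ℝ) ≤ (i:ℝ) := Nat.cast_nonneg _
      linarith
    have heq : p * (((i:ℝ) + 1) - 1) / (lam + 1 + p * ((i:ℝ) + 1))
        = (i : ℝ) / ((i : ℝ) + 1 + a) := by
      rw [div_eq_div_iff hd.ne' hd2.ne']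
      field_simp [ha_def]
      have hpa : p * a = lam + 1 := by rw [ha_def]; field_simp
      linear_combination (i:ℝ) * hpa
    push_cast at h
    calc f (i + 1) ≤ p * (((i:ℝ) + 1) - 1) / (lam + 1 + p * ((i:ℝ) + 1)) * f i := h
      _ = ((i : ℝ) / ((i : ℝ) + 1 + a)) * f i := by rw [heq]
  have hΓpos : ∀ x : ℝ, 0 < x → 0 < Real.Gamma x := fun x hx => Real.Gamma_pos_of_pos hx
  constructor
  · intro i hi
    induction i, hi using Nat.le_induction with
    | base =>
      have h2a : 0 < Real.Gamma (2 + a) := hΓpos _ (by linarith)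
      simp only [Nat.cast_one]
      rw [show (1:ℝ) + 1 + a = 2 + a by ring, Real.Gamma_one]
      rw [mul_one, mul_div_assoc, div_self h2a.ne', mul_one]
    | succ i hi ih =>
      have hipos : (0:ℝ) < (i:ℝ) := by exact_mod_cast hi
      have hd2 : (0:ℝ) < (i : ℝ) + 1 + a := by linarith
      have hΓi : 0 < Real.Gamma (i:ℝ) := hΓpos _ hipos
      have hΓia : 0 < Real.Gamma ((i:ℝ) + 1 + a) := hΓpos _ hd2
      have step := hrec' i hi
      have hfront : f (i + 1) ≤ ((i : ℝ) / ((i : ℝ) + 1 + a)) *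
          (f 1 * Real.Gamma (2 + a) * Real.Gamma (i:ℝ) / Real.Gamma ((i:ℝ) + 1 + a)) :=
        le_trans step (mul_le_mul_of_nonneg_left ih (div_nonneg hipos.le hd2.le))
      have hΓsucc : Real.Gamma ((i:ℝ) + 1) = (i:ℝ) * Real.Gamma (i:ℝ) :=
        Real.Gamma_add_one hipos.ne'
      have hΓsucc2 : Real.Gamma (((i:ℝ) + 1 + a) + 1) = ((i:ℝ) + 1 + a) * Real.Gamma ((i:ℝ) + 1 + a) :=
        Real.Gamma_add_one hd2.ne'
      have hrewrite : ((i : ℝ) / ((i : ℝ) + 1 + a)) *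
          (f 1 * Real.Gamma (2 + a) * Real.Gamma (i:ℝ) / Real.Gamma ((i:ℝ) + 1 + a))
          = f 1 * Real.Gamma (2 + a) * Real.Gamma ((i:ℝ) + 1)
              / Real.Gamma (((i:ℝ) + 1) + 1 + a) := by
        rw [hΓsucc, show ((i:ℝ) + 1) + 1 + a = ((i:ℝ) + 1 + a) + 1 by ring, hΓsucc2]
        field_simp
      push_cast
      push_cast at hfront hrewrite
      linarith [hrewrite ▸ hfront]
  · have hM : (0:ℝ) ≤ f 1 * (1 + a) ^ (1 + a) :=
      mul_nonneg (hf 1 le_rfl) (Real.rpow_nonneg (by linarith) _)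
    refine ⟨f 1 * (1 + a) ^ (1 + a), hM, ?_⟩
    have main : ∀ i : ℕ, 1 ≤ i → f i ≤ (f 1 * (1 + a) ^ (1 + a)) * ((i : ℝ) + a) ^ (-(1 + a)) := by
      intro i hi
      induction i, hi using Nat.le_induction with
      | base =>
        simp only [Nat.cast_one]
        rw [Real.rpow_neg (by linarith), mul_assoc, mul_inv_cancel₀ (Real.rpow_pos_of_pos (by linarith) _).ne', mul_one]
      | succ i hi ih =>
        have hipos : (0:ℝ) < (i:ℝ) := by exact_mod_cast hi
        have hi1 : (1:ℝ) ≤ (i:ℝ) := by exact_mod_cast hi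
        have hd2 : (0:ℝ) < (i : ℝ) + 1 + a := by linarith
        have hia : (0:ℝ) < (i:ℝ) + a := by linarith
        have hA : (0:ℝ) < ((i:ℝ)+a)^(1+a) := Real.rpow_pos_of_pos hia _
        have hB : (0:ℝ) < ((i:ℝ)+1+a)^(1+a) := Real.rpow_pos_of_pos hd2 _
        have step := hrec' i hi
        have h1 : f (i+1) ≤ ((i : ℝ) / ((i : ℝ) + 1 + a)) *
            ((f 1 * (1 + a) ^ (1 + a)) * ((i : ℝ) + a) ^ (-(1 + a))) :=
          le_trans step (mul_le_mul_of_nonneg_left ih (div_nonneg hipos.le hd2.le))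
        have key := key_ineq a (i:ℝ) ha hi1
        have hBsplit : ((i:ℝ)+1+a)^(1+a) = ((i:ℝ)+1+a) * ((i:ℝ)+1+a)^a := by
          rw [Real.rpow_one_add' hd2.le (by intro h; linarith)]
        have hkey2 : (i:ℝ) * (((i:ℝ)+1+a)^(1+a)) ≤ ((i:ℝ)+1+a) * (((i:ℝ)+a)^(1+a)) := by
          rw [hBsplit]
          nlinarith [mul_le_mul_of_nonneg_left key hd2.le]
        have h2 : ((i : ℝ) / ((i : ℝ) + 1 + a)) * ((i : ℝ) + a) ^ (-(1 + a))
            ≤ ((i : ℝ) + 1 + a) ^ (-(1 + a)) := by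
          rw [Real.rpow_neg hia.le, Real.rpow_neg hd2.le]
          have e1 : ((i : ℝ) / ((i : ℝ) + 1 + a)) * (((i:ℝ)+a)^(1+a))⁻¹
              = (i:ℝ) / (((i : ℝ) + 1 + a) * ((i:ℝ)+a)^(1+a)) := by
            field_simp
          rw [e1, inv_eq_one_div, div_le_div_iff₀ (by positivity) hB]
          nlinarith [hkey2]
        push_cast
        calc f (i+1) ≤ ((i : ℝ) / ((i : ℝ) + 1 + a)) *
              ((f 1 * (1 + a) ^ (1 + a)) * ((i : ℝ) + a) ^ (-(1 + a))) := h1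
          _ = (f 1 * (1 + a) ^ (1 + a)) *
              (((i : ℝ) / ((i : ℝ) + 1 + a)) * ((i : ℝ) + a) ^ (-(1 + a))) := by ring
          _ ≤ (f 1 * (1 + a) ^ (1 + a)) * ((i : ℝ) + 1 + a) ^ (-(1 + a)) :=
              mul_le_mul_of_nonneg_left h2 hM
    intro i hi
    have hipos : (0:ℝ) < (i:ℝ) := by exact_mod_cast hi
    have h1 := main i hi
    have h2 : ((i : ℝ) + a) ^ (-(1 + a)) ≤ (i : ℝ) ^ (-(1 + a)) := by
      rw [Real.rpow_neg (by linarith), Real.rpow_neg hipos.le]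
      apply inv_anti₀ (Real.rpow_pos_of_pos hipos _)
      exact Real.rpow_le_rpow hipos.le (by linarith) (by linarith)
    calc f i ≤ (f 1 * (1 + a) ^ (1 + a)) * ((i : ℝ) + a) ^ (-(1 + a)) := h1
      _ ≤ (f 1 * (1 + a) ^ (1 + a)) * (i : ℝ) ^ (-(1 + a)) :=
          mul_le_mul_of_nonneg_left h2 hM
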